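/- Let p be a prime, k a positive integer, and let a, b be integers with ord_p(a mod p^k) < k and ord_p(b mod p^k) < k. Then there exists a unit u of Z/p^kZ with b ≡ u^2 · a (mod p^k) if and only if ord_p(a mod p^k) = ord_p(b mod p^k) and sgn_p(a mod p^k) = sgn_p(b mod p^k). -/

import Mathlib

/-- The representative of `a` modulo `m`, as a natural number. -/
def residue (m : ℕ) (a : ℤ) : ℕ := (a % (m : ℤ)).toNat

private lemma sq_lift_odd (p : ℕ) (hp : p.Prime) (hp2 : p ≠ 2) (D : ℤ)
    (hD : ¬ (p:ℤ) ∣ D) (hsq : IsSquare (D : ZMod p)) (m : ℕ) (hm : 0 < m) :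
    ∃ x : ℤ, ¬ (p:ℤ) ∣ x ∧ (p:ℤ)^m ∣ x^2 - D := by
  haveI : Fact p.Prime := ⟨hp⟩
  have hpi : Prime (p:ℤ) := Nat.prime_iff_prime_int.1 hp
  suffices h : ∀ j : ℕ, ∃ x : ℤ, ¬ (p:ℤ) ∣ x ∧ (p:ℤ)^(j+1) ∣ x^2 - D by
    obtain ⟨j, rfl⟩ : ∃ j, m = j + 1 := ⟨m - 1, (Nat.succ_pred_eq_of_pos hm).symm⟩
    exact h j
  intro j
  induction j with
  | zero =>
    obtain ⟨r, hr⟩ := hsq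
    obtain ⟨x, hx⟩ := ZMod.intCast_surjective (n := p) r
    refine ⟨x, ?_, ?_⟩
    · intro hdvd
      apply hD
      have h0 : (x : ZMod p) = 0 := (ZMod.intCast_zmod_eq_zero_iff_dvd x p).mpr hdvd
      have : (D : ZMod p) = 0 := by rw [hr, ← hx, h0, mul_zero]
      exact (ZMod.intCast_zmod_eq_zero_iff_dvd D p).mp this
    · rw [pow_one, ← ZMod.intCast_zmod_eq_zero_iff_dvd]
      push_cast
      rw [hx, sq, ← hr, sub_self]
  | succ j ih =>
    obtain ⟨x, hx, hdvd⟩ := ih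
    have hx2 : ¬ (p:ℤ) ∣ 2 * x := by
      intro h
      rcases hpi.dvd_mul.mp h with h | h
      · have h2 : p ∣ 2 := by exact_mod_cast h
        exact hp2 ((Nat.prime_dvd_prime_iff_eq hp Nat.prime_two).mp h2)
      · exact hx h
    have hcop : IsCoprime ((p:ℤ)) (2*x) := hpi.coprime_iff_not_dvd.mpr hx2
    obtain ⟨u, w, huw⟩ := hcop
    obtain ⟨t, ht⟩ := hdvd
    set s : ℤ := -(t*w) with hs
    refine ⟨x + s*(p:ℤ)^(j+1), ?_, ?_⟩
    · intro h
      apply hx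
      have : (p:ℤ) ∣ s*(p:ℤ)^(j+1) := Dvd.dvd.mul_left (dvd_pow_self _ (Nat.succ_ne_zero j)) s
      have := dvd_sub h this
      simpa using this
    · have key : (x + s*(p:ℤ)^(j+1))^2 - D
          = (p:ℤ)^(j+1) * (t + 2*x*s) + s^2 * ((p:ℤ)^(j+1))^2 := by
        have : x^2 - D = (p:ℤ)^(j+1) * t := ht
        linear_combination this
      rw [key]
      apply dvd_add
      · rw [pow_succ]
        apply mul_dvd_mul_left
        have : t + 2*x*s = t * (1 - w*(2*x)) := by rw [hs]; ring
        rw [this]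
        have : 1 - w*(2*x) = u * p := by linear_combination -huw
        rw [this]
        exact ⟨t*u, by ring⟩
      · apply Dvd.dvd.mul_left
        rw [← pow_mul]
        exact pow_dvd_pow _ (by omega)

private lemma sq_lift_two (D : ℤ) (hD : (8:ℤ) ∣ D - 1) (m : ℕ) (hm : 3 ≤ m) :
    ∃ x : ℤ, ¬ (2:ℤ) ∣ x ∧ (2:ℤ)^m ∣ x^2 - D := by
  suffices h : ∀ j : ℕ, ∃ x : ℤ, ¬ (2:ℤ) ∣ x ∧ (2:ℤ)^(j+3) ∣ x^2 - D by
    obtain ⟨j, rfl⟩ : ∃ j, m = j + 3 := ⟨m - 3, by omega⟩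
    exact h j
  intro j
  induction j with
  | zero =>
    refine ⟨1, by norm_num, ?_⟩
    have : (1:ℤ)^2 - D = -(D - 1) := by ring
    rw [this]
    exact (by norm_num : ((2:ℤ))^(0+3) = 8) ▸ hD.neg_right
  | succ j ih =>
    obtain ⟨x, hx, hdvd⟩ := ih
    obtain ⟨t, ht⟩ := hdvd
    refine ⟨x - t*(2:ℤ)^(j+2), ?_, ?_⟩
    · intro h
      apply hx
      have h2 : (2:ℤ) ∣ t*(2:ℤ)^(j+2) := ⟨t*2^(j+1), by ring⟩
      have := dvd_add h h2
      simpa using this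
    · have hodd : (2:ℤ) ∣ 1 - x := by
        rcases Int.even_or_odd x with he | ho
        · exact absurd he.two_dvd hx
        · obtain ⟨n, rfl⟩ := ho; exact ⟨-n, by ring⟩
      obtain ⟨c, hc⟩ := hodd
      have key : (x - t*(2:ℤ)^(j+2))^2 - D
          = (2:ℤ)^(j+4) * (t*c) + (t^2*2^(j)) * (2:ℤ)^(j+4) := by
        have h1 : x^2 - D = (2:ℤ)^(j+3) * t := ht
        have h2 : 1 - x = 2*c := hc
        linear_combination h1 + (2:ℤ)^(j+3)*t*h2
      rw [key]
      exact dvd_add ⟨t*c, rfl⟩ ⟨t^2*2^j, mul_comm _ _⟩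

private lemma key_odd (p : ℕ) [hpf : Fact p.Prime] (hp2 : p ≠ 2) (m : ℕ) (hm : 0 < m)
    (A' B' : ℕ) (hA : ¬ p ∣ A') (hB : ¬ p ∣ B') :
    (∃ U : ℤ, ¬ (p:ℤ) ∣ U ∧ (p:ℤ)^m ∣ U^2 * (A':ℤ) - (B':ℤ)) ↔
      legendreSym p (A' : ℤ) = legendreSym p (B' : ℤ) := by
  have hp := hpf.out
  have hpi : Prime (p:ℤ) := Nat.prime_iff_prime_int.1 hp
  have hAi : ¬ (p:ℤ) ∣ (A':ℤ) := fun h => hA (by exact_mod_cast h)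
  have hBi : ¬ (p:ℤ) ∣ (B':ℤ) := fun h => hB (by exact_mod_cast h)
  have hAz : ((A':ℤ) : ZMod p) ≠ 0 := fun h => hAi ((ZMod.intCast_zmod_eq_zero_iff_dvd _ p).mp h)
  have hBz : ((B':ℤ) : ZMod p) ≠ 0 := fun h => hBi ((ZMod.intCast_zmod_eq_zero_iff_dvd _ p).mp h)
  constructor
  · rintro ⟨U, hU, hdvd⟩
    have hUz : ((U:ℤ) : ZMod p) ≠ 0 := fun h => hU ((ZMod.intCast_zmod_eq_zero_iff_dvd _ p).mp h)
    have h1 : (p:ℤ) ∣ U^2 * (A':ℤ) - (B':ℤ) :=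
      dvd_trans (dvd_pow_self (p:ℤ) hm.ne') hdvd
    have h2 : (((U^2 * (A':ℤ)) : ℤ) : ZMod p) = ((B':ℤ) : ZMod p) := by
      rw [← sub_eq_zero, ← Int.cast_sub]
      exact (ZMod.intCast_zmod_eq_zero_iff_dvd _ p).mpr h1
    have h3 : legendreSym p (U^2 * (A':ℤ)) = legendreSym p (B':ℤ) := by
      unfold legendreSym
      rw [h2]
    rw [legendreSym.mul, legendreSym.sq_one' p hUz, one_mul] at h3
    exact h3
  · intro hleg
    have hsq : IsSquare (((A':ℤ) * (B':ℤ) : ℤ) : ZMod p) := by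
      rw [← legendreSym.eq_one_iff p (by rw [Int.cast_mul]; exact mul_ne_zero hAz hBz)]
      rw [legendreSym.mul, ← hleg, ← sq]
      exact legendreSym.sq_one p hAz
    obtain ⟨x, hx, hxd⟩ := sq_lift_odd p hp hp2 ((A':ℤ)*(B':ℤ))
      (fun h => (hpi.dvd_mul.mp h).elim hAi hBi) hsq m hm
    have hcop : IsCoprime ((A':ℤ)) ((p:ℤ)^m) :=
      ((hpi.coprime_iff_not_dvd.mpr hAi).symm.pow_right)
    obtain ⟨c, d, hcd⟩ := hcop
    refine ⟨x * c, ?_, ?_⟩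
    · intro h
      rcases hpi.dvd_mul.mp h with h | h
      · exact hx h
      · have : (p:ℤ) ∣ c * (A':ℤ) := Dvd.dvd.mul_right h _
        have h1 : (p:ℤ) ∣ d * (p:ℤ)^m := Dvd.dvd.mul_left (dvd_pow_self _ hm.ne') d
        have := dvd_add this h1
        rw [hcd] at this
        exact hpi.not_dvd_one this
    · have key : (x*c)^2 * (A':ℤ) - (B':ℤ)
          = c^2 * (A':ℤ) * (x^2 - (A':ℤ)*(B':ℤ)) + (B':ℤ) * ((c*(A':ℤ))^2 - 1) := by ring
      rw [key]
      apply dvd_add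
      · exact Dvd.dvd.mul_left hxd _
      · apply Dvd.dvd.mul_left
        have h1 : c*(A':ℤ) - 1 = -(d * (p:ℤ)^m) := by linear_combination hcd
        have : (c*(A':ℤ))^2 - 1 = (c*(A':ℤ) - 1) * (c*(A':ℤ) + 1) := by ring
        rw [this, h1]
        exact (dvd_neg.mpr ⟨d, mul_comm d _⟩).mul_right _

private lemma odd_sq_mod_eight {U : ℤ} (hU : ¬ (2:ℤ) ∣ U) : (8:ℤ) ∣ U^2 - 1 := by
  rcases Int.even_or_odd U with he | ho
  · exact absurd he.two_dvd hU
  obtain ⟨n, rfl⟩ := ho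
  obtain ⟨c, hc⟩ := Int.even_mul_succ_self n
  exact ⟨c, by linear_combination 4*hc⟩

private lemma key_two (m : ℕ) (hm : 0 < m) (A' B' : ℕ) (hA : ¬ 2 ∣ A') (hB : ¬ 2 ∣ B')
    (hAlt : A' < 2^m) (hBlt : B' < 2^m) :
    (∃ U : ℤ, ¬ (2:ℤ) ∣ U ∧ (2:ℤ)^m ∣ U^2 * (A':ℤ) - (B':ℤ)) ↔ A' % 8 = B' % 8 := by
  have h2i : Prime (2:ℤ) := Int.prime_two
  have hAi : ¬ (2:ℤ) ∣ (A':ℤ) := fun h => hA (by exact_mod_cast h)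
  constructor
  · rintro ⟨U, hU, hdvd⟩
    have hU8 : (8:ℤ) ∣ U^2 - 1 := odd_sq_mod_eight hU
    rcases le_or_gt 3 m with h3 | h3
    · have h8m : (8:ℤ) ∣ (2:ℤ)^m := by
        calc (8:ℤ) = 2^3 := by norm_num
        _ ∣ 2^m := pow_dvd_pow 2 h3
      have : (8:ℤ) ∣ (B':ℤ) - (A':ℤ) := by
        have h1 : (8:ℤ) ∣ U^2 * (A':ℤ) - (B':ℤ) := h8m.trans hdvd
        have h2 : (8:ℤ) ∣ (U^2 - 1) * (A':ℤ) := hU8.mul_right _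
        have key : (B':ℤ) - (A':ℤ) = (U^2-1)*(A':ℤ) - (U^2 * (A':ℤ) - (B':ℤ)) := by ring
        rw [key]
        exact dvd_sub h2 h1
      exact (Nat.modEq_iff_dvd.mpr this).symm ▸ rfl
    · have hAB : A' = B' := by
        have h2m8 : ((2:ℤ)^m) ∣ 8 := by
          have : (8:ℤ) = 2^3 := by norm_num
          rw [this]
          exact pow_dvd_pow 2 (by omega)
        have : ((2:ℤ)^m) ∣ (B':ℤ) - (A':ℤ) := by
          have h1 : ((2:ℤ)^m) ∣ (U^2 - 1) * (A':ℤ) := (h2m8.trans hU8).mul_right _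
          have key : (B':ℤ) - (A':ℤ) = (U^2-1)*(A':ℤ) - (U^2 * (A':ℤ) - (B':ℤ)) := by ring
          rw [key]
          exact dvd_sub h1 hdvd
        have hmod : A' ≡ B' [MOD 2^m] := by
          rw [Nat.modEq_iff_dvd]
          exact_mod_cast this
        calc A' = A' % 2^m := (Nat.mod_eq_of_lt hAlt).symm
        _ = B' % 2^m := hmod
        _ = B' := Nat.mod_eq_of_lt hBlt
      rw [hAB]
  · intro h
    have hmod : (8:ℤ) ∣ (B':ℤ) - (A':ℤ) := by
      have : A' ≡ B' [MOD 8] := h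
      exact_mod_cast Nat.modEq_iff_dvd.mp this
    rcases le_or_gt 3 m with h3 | h3
    · have hcop : IsCoprime ((A':ℤ)) ((2:ℤ)^m) :=
        ((h2i.coprime_iff_not_dvd.mpr hAi).symm.pow_right)
      obtain ⟨c, d, hcd⟩ := hcop
      have h8m : (8:ℤ) ∣ (2:ℤ)^m := by
        calc (8:ℤ) = 2^3 := by norm_num
        _ ∣ 2^m := pow_dvd_pow 2 h3
      have hD8 : (8:ℤ) ∣ (B':ℤ)*c - 1 := by
        have key : (B':ℤ)*c - 1 = c*((B':ℤ) - (A':ℤ)) + (-(d*(2:ℤ)^m)) := by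
          linear_combination hcd
        rw [key]
        exact dvd_add (hmod.mul_left c) ((h8m.mul_left d).neg_right)
      obtain ⟨x, hx, hxd⟩ := sq_lift_two ((B':ℤ)*c) hD8 m h3
      refine ⟨x, hx, ?_⟩
      have key : x^2 * (A':ℤ) - (B':ℤ)
          = (A':ℤ) * (x^2 - (B':ℤ)*c) + (B':ℤ) * (c*(A':ℤ) - 1) := by ring
      rw [key]
      apply dvd_add
      · exact hxd.mul_left _
      · have h1 : c*(A':ℤ) - 1 = -(d * (2:ℤ)^m) := by linear_combination hcd
        rw [h1]
        exact ((dvd_neg.mpr ⟨d, mul_comm d _⟩)).mul_left _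
    · have hAB : A' = B' := by
        have h1 : A' < 8 := lt_of_lt_of_le hAlt (by calc (2:ℕ)^m ≤ 2^3 := Nat.pow_le_pow_right (by norm_num) (by omega)
                                                       _ = 8 := by norm_num)
        have h2 : B' < 8 := lt_of_lt_of_le hBlt (by calc (2:ℕ)^m ≤ 2^3 := Nat.pow_le_pow_right (by norm_num) (by omega)
                                                       _ = 8 := by norm_num)
        omega
      refine ⟨1, by norm_num, ?_⟩
      rw [hAB]
      simp

private lemma residue_lt (m : ℕ) (hm : 0 < m) (a : ℤ) : residue m a < m := by
  unfold residue
  have h1 : a % (m:ℤ) < m := Int.emod_lt_of_pos a (by exact_mod_cast hm)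
  have h2 : 0 ≤ a % (m:ℤ) := Int.emod_nonneg a (by exact_mod_cast hm.ne')
  omega

private lemma residue_cast (m : ℕ) (hm : 0 < m) (a : ℤ) :
    ((residue m a : ℕ) : ZMod m) = (a : ZMod m) := by
  unfold residue
  have h2 : 0 ≤ a % (m:ℤ) := Int.emod_nonneg a (by exact_mod_cast hm.ne')
  have h3 : ((a % (m:ℤ)).toNat : ℤ) = a % m := Int.toNat_of_nonneg h2
  calc ((a % (m:ℤ)).toNat : ZMod m) = (((a % (m:ℤ)).toNat : ℤ) : ZMod m) := by push_cast; ring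
  _ = ((a % (m:ℤ) : ℤ) : ZMod m) := by rw [h3]
  _ = (a : ZMod m) := by
        rw [ZMod.intCast_eq_intCast_iff]
        exact Int.emod_emod_of_dvd a dvd_rfl

/-- b ≡ u² a (mod p^k) for some unit u iff the p^k-symbols
(order, sign) of a and b agree, assuming both orders are < k. -/
theorem unit_square_equiv_iff_symbol_eq (p k : ℕ) [Fact p.Prime] (hk : 0 < k)
    (a b : ℤ)
    (ha0 : residue (p ^ k) a ≠ 0) (hb0 : residue (p ^ k) b ≠ 0)
    (ha : padicValNat p (residue (p ^ k) a) < k)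
    (hb : padicValNat p (residue (p ^ k) b) < k) :
    (∃ u : (ZMod (p ^ k))ˣ,
        (b : ZMod (p ^ k)) = (u : ZMod (p ^ k)) ^ 2 * (a : ZMod (p ^ k))) ↔
      padicValNat p (residue (p ^ k) a) = padicValNat p (residue (p ^ k) b) ∧
        (if p = 2 then
          (residue (p ^ k) a) / p ^ padicValNat p (residue (p ^ k) a) % 8 =
            (residue (p ^ k) b) / p ^ padicValNat p (residue (p ^ k) b) % 8
        else
          legendreSym p ((residue (p ^ k) a) / p ^ padicValNat p (residue (p ^ k) a)) =
            legendreSym p ((residue (p ^ k) b) / p ^ padicValNat p (residue (p ^ k) b))) := by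
  have hp : p.Prime := Fact.out
  have hpi : Prime (p:ℤ) := Nat.prime_iff_prime_int.1 hp
  have hp0 : (p:ℤ) ≠ 0 := by exact_mod_cast hp.pos.ne'
  have hkpos : 0 < p ^ k := pow_pos hp.pos k
  haveI : NeZero (p ^ k) := ⟨hkpos.ne'⟩
  set A := residue (p ^ k) a with hAdef
  set B := residue (p ^ k) b with hBdef
  set α := padicValNat p A with hαdef
  set β := padicValNat p B with hβdef
  set A₁ := A / p ^ α with hA₁def
  set B₁ := B / p ^ β with hB₁def
  have hAlt : A < p ^ k := residue_lt _ hkpos a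
  have hBlt : B < p ^ k := residue_lt _ hkpos b
  have hAcast : ((A : ℕ) : ZMod (p^k)) = (a : ZMod (p^k)) := residue_cast _ hkpos a
  have hBcast : ((B : ℕ) : ZMod (p^k)) = (b : ZMod (p^k)) := residue_cast _ hkpos b
  have hAeq : p ^ α * A₁ = A := by
    have h := Nat.ordProj_mul_ordCompl_eq_self A p
    rwa [Nat.factorization_def A hp] at h
  have hBeq : p ^ β * B₁ = B := by
    have h := Nat.ordProj_mul_ordCompl_eq_self B p
    rwa [Nat.factorization_def B hp] at h
  have hA1 : ¬ p ∣ A₁ := by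
    have h := Nat.not_dvd_ordCompl hp ha0
    rwa [Nat.factorization_def A hp] at h
  have hB1 : ¬ p ∣ B₁ := by
    have h := Nat.not_dvd_ordCompl hp hb0
    rwa [Nat.factorization_def B hp] at h
  have hAint : (A:ℤ) = (p:ℤ)^α * (A₁:ℤ) := by exact_mod_cast hAeq.symm
  have hBint : (B:ℤ) = (p:ℤ)^β * (B₁:ℤ) := by exact_mod_cast hBeq.symm
  have hA₁lt : A₁ < p ^ (k - α) := by
    have h : p^α * A₁ < p^α * p^(k-α) := by
      rw [hAeq, ← pow_add]
      have : α + (k - α) = k := by omega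
      rw [this]; exact hAlt
    exact Nat.lt_of_mul_lt_mul_left h
  -- the equivalence with an integer statement
  have main : (∃ u : (ZMod (p ^ k))ˣ,
        (b : ZMod (p ^ k)) = (u : ZMod (p ^ k)) ^ 2 * (a : ZMod (p ^ k))) ↔
      (∃ U : ℤ, ¬ (p:ℤ) ∣ U ∧ (p:ℤ)^k ∣ U^2*(A:ℤ) - (B:ℤ)) := by
    constructor
    · rintro ⟨u, hu⟩
      refine ⟨((u : ZMod (p^k)).val : ℤ), ?_, ?_⟩
      · intro hdvd
        have hcop : Nat.Coprime (u : ZMod (p^k)).val (p^k) := ZMod.val_coe_unit_coprime u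
        have hpd : p ∣ (u : ZMod (p^k)).val := by exact_mod_cast hdvd
        have hg : p ∣ Nat.gcd (u : ZMod (p^k)).val (p^k) :=
          Nat.dvd_gcd hpd (dvd_pow_self p hk.ne')
        rw [hcop] at hg
        have := Nat.le_of_dvd one_pos hg
        have := hp.two_le
        omega
      · have hc : ((p^k : ℕ) : ℤ) = (p:ℤ)^k := by push_cast; ring
        rw [← hc, ← ZMod.intCast_zmod_eq_zero_iff_dvd]
        push_cast
        have h1 : (((u : ZMod (p^k)).val : ℕ) : ZMod (p^k)) = (u : ZMod (p^k)) := by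
          simp [ZMod.natCast_val, ZMod.cast_id]
        rw [h1, hAcast, hBcast, hu]
        ring
    · rintro ⟨U, hU, hdvd⟩
      have hcop : IsCoprime U ((p:ℤ)^k) := ((hpi.coprime_iff_not_dvd.mpr hU).symm.pow_right)
      obtain ⟨c, d, hcd⟩ := hcop
      have hz : ((p : ZMod (p^k)))^k = 0 := by
        rw [← Nat.cast_pow, ZMod.natCast_self]
      have h1 : (U : ZMod (p^k)) * (c : ZMod (p^k)) = 1 := by
        have h := congrArg (fun z : ℤ => (z : ZMod (p^k))) hcd
        push_cast at h
        rw [hz, mul_zero, add_zero] at h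
        rw [mul_comm]; exact h
      have hunit : IsUnit ((U : ℤ) : ZMod (p^k)) := IsUnit.of_mul_eq_one _ h1
      refine ⟨hunit.unit, ?_⟩
      rw [IsUnit.unit_spec]
      have h0 : ((U^2*(A:ℤ) - (B:ℤ) : ℤ) : ZMod (p^k)) = 0 := by
        rw [ZMod.intCast_zmod_eq_zero_iff_dvd]
        exact_mod_cast hdvd
      push_cast at h0
      rw [sub_eq_zero, hAcast, hBcast] at h0
      exact h0.symm
  rw [main]
  -- order part
  have horder : ∀ U : ℤ, ¬ (p:ℤ) ∣ U → (p:ℤ)^k ∣ U^2*(A:ℤ) - (B:ℤ) → β = α := by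
    intro U hU hdvd
    have hAd : (p:ℤ)^α ∣ (A:ℤ) := by
      rw [hAint]; exact Dvd.dvd.mul_right dvd_rfl _
    have hd1 : (p:ℤ)^α ∣ (B:ℤ) := by
      have h1 : (p:ℤ)^α ∣ U^2*(A:ℤ) := hAd.mul_left _
      have h2 : (p:ℤ)^α ∣ U^2*(A:ℤ) - (B:ℤ) := (pow_dvd_pow _ ha.le).trans hdvd
      have h3 := dvd_sub h1 h2
      simpa using h3
    have hd1n : p^α ∣ B := by exact_mod_cast hd1
    have hle : α ≤ β := (padicValNat_dvd_iff_le hb0).mp hd1n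
    have hd2 : ¬ p^(α+1) ∣ B := by
      intro h
      have hdint : (p:ℤ)^(α+1) ∣ (B:ℤ) := by exact_mod_cast h
      have h2 : (p:ℤ)^(α+1) ∣ U^2*(A:ℤ) - (B:ℤ) := (pow_dvd_pow _ (by omega : α+1 ≤ k)).trans hdvd
      have h3 : (p:ℤ)^(α+1) ∣ U^2*(A:ℤ) := by
        have := dvd_add h2 hdint
        simpa using this
      rw [hAint] at h3
      have h4 : (p:ℤ)^α * (p:ℤ) ∣ (p:ℤ)^α * (U^2 * (A₁:ℤ)) := by
        rw [← pow_succ] ; convert h3 using 1 ; ring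
      have h5 : (p:ℤ) ∣ U^2 * (A₁:ℤ) :=
        (mul_dvd_mul_iff_left (pow_ne_zero α hp0)).mp h4
      rcases hpi.dvd_mul.mp h5 with h6 | h6
      · exact hU (hpi.dvd_of_dvd_pow h6)
      · exact hA1 (by exact_mod_cast h6)
    have hge : β ≤ α := by
      by_contra hcon
      exact hd2 ((padicValNat_dvd_iff_le hb0).mpr (by omega))
    omega
  -- cancellation
  have cancel : β = α → ∀ U : ℤ,
      ((p:ℤ)^k ∣ U^2*(A:ℤ) - (B:ℤ) ↔ (p:ℤ)^(k-α) ∣ U^2*(A₁:ℤ) - (B₁:ℤ)) := by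
    intro hβα U
    have hkk : α + (k - α) = k := by omega
    have hsplit : (p:ℤ)^k = (p:ℤ)^α * (p:ℤ)^(k-α) := by rw [← pow_add, hkk]
    have hexp : U^2*(A:ℤ) - (B:ℤ) = (p:ℤ)^α * (U^2*(A₁:ℤ) - (B₁:ℤ)) := by
      rw [hAint, hBint, hβα]; ring
    rw [hexp, hsplit]
    exact mul_dvd_mul_iff_left (pow_ne_zero α hp0)
  -- sign part
  have signiff : β = α →
      ((∃ U : ℤ, ¬ (p:ℤ) ∣ U ∧ (p:ℤ)^(k-α) ∣ U^2*(A₁:ℤ) - (B₁:ℤ)) ↔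
        (if p = 2 then A₁ % 8 = B₁ % 8
         else legendreSym p ((A:ℤ) / (p:ℤ)^α) = legendreSym p ((B:ℤ) / (p:ℤ)^β))) := by
    intro hβα
    have hconvA : (A:ℤ) / (p:ℤ)^α = (A₁:ℤ) := by
      rw [← Nat.cast_pow, ← Int.natCast_div]
    have hconvB : (B:ℤ) / (p:ℤ)^β = (B₁:ℤ) := by
      rw [← Nat.cast_pow, ← Int.natCast_div]
    have hmpos : 0 < k - α := by omega
    have hB₁lt : B₁ < p ^ (k - α) := by
      have h : p^α * B₁ < p^α * p^(k-α) := by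
        rw [← hβα, hBeq, ← pow_add]
        have : β + (k - β) = k := by omega
        rw [hβα]
        have h2 : α + (k - α) = k := by omega
        rw [h2]; exact hBlt
      exact Nat.lt_of_mul_lt_mul_left h
    by_cases hp2 : p = 2
    · rw [if_pos hp2]
      subst hp2
      exact key_two (k-α) hmpos A₁ B₁ hA1 hB1 hA₁lt hB₁lt
    · rw [if_neg hp2, hconvA, hconvB]
      exact key_odd p hp2 (k-α) hmpos A₁ B₁ hA1 hB1
  constructor
  · rintro ⟨U, hU, hdvd⟩
    have hβα : β = α := horder U hU hdvd
    refine ⟨hβα.symm, ?_⟩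
    exact (signiff hβα).mp ⟨U, hU, (cancel hβα U).mp hdvd⟩
  · rintro ⟨hαβ, hsign⟩
    have hβα : β = α := hαβ.symm
    obtain ⟨U, hU, hsm⟩ := (signiff hβα).mpr hsign
    exact ⟨U, hU, (cancel hβα U).mpr hsm⟩
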